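/- (Lemma F.2, σ_avg case: second-moment bound) Under the setting of the matrix invariant (forward invariants for s_1,…,s_l with 0 < ‖r^{s_j}‖₁ ≤ r^s_max, backward invariants for t_1,…,t_l with entries of r^{t_j} in [0, r^t_max]), let σ := σ_avg where σ_avg(u) = (1/l) Σ_{j=1}^l r^{s_j}(u)/‖r^{s_j}‖₁, assume σ(u) > 0 for all u ∈ V, and for u, v ∈ V set X(u,v) := R_S^T diag(1/σ) e_u e_v^T R_T ∈ ℝ^{l×l}. Define M₁ := Σ_{u,v∈V} σ(u) π_u(v) X(u,v) X(u,v)^T and M₂ := Σ_{u,v∈V} σ(u) π_u(v) X(u,v)^T X(u,v). Then max{‖M₁‖₂, ‖M₂‖₂} ≤ l² r^s_max r^t_max ‖Π(S,T)‖_F. -/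

import Mathlib

open scoped BigOperators
open Matrix

/-- The Neumann series `∑ (1-α)^i P^i` defining personalized PageRank. -/
noncomputable def pprSeries {V : Type*} [Fintype V] [DecidableEq V]
    (P : Matrix V V ℝ) (α : ℝ) : Matrix V V ℝ :=
  ∑' i : ℕ, (1 - α) ^ i • P ^ i

/-- Personalized PageRank row vector with jump distribution `σ`. -/
noncomputable def ppr {V : Type*} [Fintype V] [DecidableEq V]
    (P : Matrix V V ℝ) (α : ℝ) (σ : V → ℝ) : V → ℝ :=
  Matrix.vecMul (α • σ) (pprSeries P α)

/-- `π_s := π_{e_s}` where `e_s` is the indicator row vector of `s`. -/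
noncomputable def pprPoint {V : Type*} [Fintype V] [DecidableEq V]
    (P : Matrix V V ℝ) (α : ℝ) (s : V) : V → ℝ :=
  ppr P α (Pi.single s 1)

/-- Spectral (operator) norm of an `l × l` real matrix:
`‖A‖₂ = sup { ‖A x‖₂ : ‖x‖₂ = 1 }`. -/
noncomputable def specNorm {l : ℕ} (A : Matrix (Fin l) (Fin l) ℝ) : ℝ :=
  sSup {c : ℝ | ∃ x : Fin l → ℝ, (∑ j, x j ^ 2) = 1 ∧
    c = Real.sqrt (∑ i, (∑ j, A i j * x j) ^ 2)}

/-- Frobenius norm of an `l × l` real matrix. -/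
noncomputable def frobNorm {l : ℕ} (A : Matrix (Fin l) (Fin l) ℝ) : ℝ :=
  Real.sqrt (∑ i, ∑ j, A i j ^ 2)

/-! ### Auxiliary lemmas -/

lemma pprPoint_eq_aux {V : Type*} [Fintype V] [DecidableEq V]
    (P : Matrix V V ℝ) (α : ℝ) (x u : V) :
    pprPoint P α x u = α * pprSeries P α x u := by
  simp [pprPoint, ppr, Matrix.vecMul, dotProduct, Pi.single_apply, ite_mul,
    Finset.sum_ite_eq]

lemma pprPoint_nonneg_aux {V : Type*} [Fintype V] [DecidableEq V]
    (P : Matrix V V ℝ) (hP0 : ∀ u v, 0 ≤ P u v) (hP1 : ∀ u, ∑ v, P u v = 1)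
    (α : ℝ) (hα0 : 0 < α) (hα1 : α < 1) (x u : V) : 0 ≤ pprPoint P α x u := by
  have hpow0 : ∀ (i : ℕ) (a b : V), 0 ≤ (P ^ i) a b := by
    intro i
    induction i with
    | zero => intro a b; by_cases h : a = b <;> simp [Matrix.one_apply, h]
    | succ n ih =>
      intro a b
      rw [pow_succ, Matrix.mul_apply]
      exact Finset.sum_nonneg fun w _ => mul_nonneg (ih a w) (hP0 w b)
  have hpow1 : ∀ (i : ℕ) (a : V), ∑ b, (P ^ i) a b = 1 := by
    intro i
    induction i with
    | zero => intro a; simp [Matrix.one_apply]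
    | succ n ih =>
      intro a
      simp only [pow_succ, Matrix.mul_apply]
      rw [Finset.sum_comm]
      simp_rw [← Finset.mul_sum, hP1, mul_one]
      exact ih a
  have hle : ∀ (i : ℕ) (a b : V), (P ^ i) a b ≤ 1 := by
    intro i a b
    calc (P ^ i) a b ≤ ∑ c, (P ^ i) a c :=
      Finset.single_le_sum (fun c _ => hpow0 i a c) (Finset.mem_univ b)
    _ = 1 := hpow1 i a
  have h1α : (0:ℝ) ≤ 1 - α := by linarith
  have h1α' : (1 - α : ℝ) < 1 := by linarith
  have hent : ∀ a b : V, Summable fun i : ℕ => ((1 - α) ^ i • P ^ i) a b := by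
    intro a b
    simp only [Matrix.smul_apply, smul_eq_mul]
    apply Summable.of_nonneg_of_le
      (fun i => mul_nonneg (pow_nonneg h1α i) (hpow0 i a b))
      (fun i => by
        calc (1-α)^i * (P^i) a b ≤ (1-α)^i * 1 :=
          mul_le_mul_of_nonneg_left (hle i a b) (pow_nonneg h1α i)
        _ = (1-α)^i := mul_one _)
    exact summable_geometric_of_lt_one h1α h1α'
  have hsum : Summable (fun i : ℕ => (1 - α) ^ i • P ^ i) := by
    exact Pi.summable.mpr fun a => Pi.summable.mpr fun b => hent a b
  have hser : 0 ≤ pprSeries P α x u := by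
    have : pprSeries P α x u = ∑' i, ((1 - α) ^ i • P ^ i) x u := by
      rw [pprSeries]
      erw [tsum_apply hsum, tsum_apply (Pi.summable.mp hsum x)]
    rw [this]
    exact tsum_nonneg fun i => by
      simpa [Matrix.smul_apply] using mul_nonneg (pow_nonneg h1α i) (hpow0 i x u)
  rw [pprPoint_eq_aux]
  exact mul_nonneg hα0.le hser

lemma specNorm_le_of_sq_sum_le_aux {l : ℕ} (M : Matrix (Fin l) (Fin l) ℝ) (c : ℝ)
    (hc : 0 ≤ c) (h : ∑ i, ∑ j, M i j ^ 2 ≤ c ^ 2) : specNorm M ≤ c := by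
  apply Real.sSup_le _ hc
  rintro w ⟨y, hy, rfl⟩
  have key : ∑ i, (∑ j, M i j * y j) ^ 2 ≤ c ^ 2 := by
    calc ∑ i, (∑ j, M i j * y j) ^ 2
        ≤ ∑ i, (∑ j, M i j ^ 2) * (∑ j, y j ^ 2) :=
          Finset.sum_le_sum fun i _ => Finset.sum_mul_sq_le_sq_mul_sq _ _ _
      _ = ∑ i, ∑ j, M i j ^ 2 := by simp [hy]
      _ ≤ c ^ 2 := h
  calc Real.sqrt (∑ i, (∑ j, M i j * y j) ^ 2) ≤ Real.sqrt (c^2) := Real.sqrt_le_sqrt key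
    _ = c := Real.sqrt_sq hc

lemma specNorm_le_of_entry_bound_aux {l : ℕ} (M Pi' : Matrix (Fin l) (Fin l) ℝ) (B : ℝ)
    (hB : 0 ≤ B) (h0 : ∀ i k, 0 ≤ M i k)
    (hub : ∀ i k, M i k ≤ B * ∑ j, Pi' k j) :
    specNorm M ≤ (l : ℝ) * B * frobNorm Pi' := by
  have hf : 0 ≤ frobNorm Pi' := Real.sqrt_nonneg _
  apply specNorm_le_of_sq_sum_le_aux
  · positivity
  · have hsq : ((l : ℝ) * B * frobNorm Pi') ^ 2
        = (l:ℝ)^2 * B^2 * ∑ i, ∑ j, Pi' i j ^ 2 := by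
      rw [mul_pow, mul_pow, frobNorm, Real.sq_sqrt]
      exact Finset.sum_nonneg fun i _ => Finset.sum_nonneg fun j _ => sq_nonneg _
    rw [hsq]
    calc ∑ i, ∑ k, M i k ^ 2
        ≤ ∑ i : Fin l, ∑ k, (B * ∑ j, Pi' k j) ^ 2 := by
          refine Finset.sum_le_sum fun i _ => Finset.sum_le_sum fun k _ => ?_
          exact pow_le_pow_left₀ (h0 i k) (hub i k) 2
      _ = (l:ℝ) * ∑ k, (B * ∑ j, Pi' k j) ^ 2 := by
          rw [Finset.sum_const, Finset.card_fin, nsmul_eq_mul]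
      _ = (l:ℝ) * B^2 * ∑ k, (∑ j, Pi' k j) ^ 2 := by
          simp_rw [mul_pow]; rw [← Finset.mul_sum]; ring
      _ ≤ (l:ℝ) * B^2 * ∑ k, ((l:ℝ) * ∑ j, Pi' k j ^ 2) := by
          refine mul_le_mul_of_nonneg_left (Finset.sum_le_sum fun k _ => ?_) (by positivity)
          simpa using sq_sum_le_card_mul_sum_sq (s := (Finset.univ : Finset (Fin l)))
            (f := fun j => Pi' k j)
      _ = (l:ℝ)^2 * B^2 * ∑ i, ∑ j, Pi' i j ^ 2 := by
          rw [← Finset.mul_sum]; ring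

theorem stmt15 {V : Type*} [Fintype V] [DecidableEq V] [Nonempty V]
    (P : Matrix V V ℝ) (hP0 : ∀ u v, 0 ≤ P u v) (hP1 : ∀ u, ∑ v, P u v = 1)
    (α : ℝ) (hα0 : 0 < α) (hα1 : α < 1)
    (l : ℕ) (hl : 1 ≤ l) (s t : Fin l → V)
    (rsmax rtmax : ℝ)
    (ps rs pt rt : Fin l → V → ℝ)
    (hps0 : ∀ j v, 0 ≤ ps j v) (hrs0 : ∀ j v, 0 ≤ rs j v)
    (hpt0 : ∀ j v, 0 ≤ pt j v) (hrt0 : ∀ j v, 0 ≤ rt j v)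
    -- forward invariant for each s_j, with 0 < ‖r^{s_j}‖₁ ≤ r^s_max
    (hfwd : ∀ j u, pprPoint P α (s j) u = ps j u + ∑ x, rs j x * pprPoint P α x u)
    (hrspos : ∀ j, 0 < ∑ x, |rs j x|) (hrsub : ∀ j, ∑ x, |rs j x| ≤ rsmax)
    -- backward invariant for each t_j, with entries of r^{t_j} in [0, r^t_max]
    (hbwd : ∀ j v, pprPoint P α v (t j) = pt j v + ∑ x, pprPoint P α v x * rt j x)
    (hrtub : ∀ j v, rt j v ≤ rtmax)
    -- σ = σ_avg
    (σ : V → ℝ) (hσdef : σ = fun u => (1 / (l : ℝ)) * ∑ j, rs j u / ∑ x, |rs j x|)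
    (hσpos : ∀ u, 0 < σ u)
    (RS RT : Matrix V (Fin l) ℝ)
    (hRS : RS = Matrix.of fun u j => rs j u) (hRT : RT = Matrix.of fun u j => rt j u)
    -- X(u,v) = R_Sᵀ diag(1/σ) e_u e_vᵀ R_T
    (X : V → V → Matrix (Fin l) (Fin l) ℝ)
    (hX : X = fun u v => RSᵀ * Matrix.diagonal (fun x => 1 / σ x) *
      Matrix.single u v (1:ℝ) * RT)
    (PiST : Matrix (Fin l) (Fin l) ℝ)
    (hPiST : PiST = Matrix.of fun i j => pprPoint P α (s i) (t j))
    (M₁ M₂ : Matrix (Fin l) (Fin l) ℝ)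
    (hM₁ : M₁ = ∑ u, ∑ v, (σ u * pprPoint P α u v) • (X u v * (X u v)ᵀ))
    (hM₂ : M₂ = ∑ u, ∑ v, (σ u * pprPoint P α u v) • ((X u v)ᵀ * X u v)) :
    max (specNorm M₁) (specNorm M₂) ≤ (l : ℝ) ^ 2 * rsmax * rtmax * frobNorm PiST := by
  set π := pprPoint P α with hπdef
  have hπ0 : ∀ a b, 0 ≤ π a b := fun a b =>
    pprPoint_nonneg_aux P hP0 hP1 α hα0 hα1 a b
  have hlpos : (0:ℝ) < l := by exact_mod_cast hl
  have j₀ : Fin l := ⟨0, hl⟩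
  have v₀ : V := Classical.arbitrary V
  have hrsmax0 : 0 ≤ rsmax := le_trans (hrspos j₀).le (hrsub j₀)
  have hrtmax0 : 0 ≤ rtmax := le_trans (hrt0 j₀ v₀) (hrtub j₀ v₀)
  -- entries of X
  have hXe : ∀ u v (i j : Fin l), X u v i j = (1 / σ u) * rs i u * rt j v := by
    intro u v i j
    subst hX hRS hRT
    simp [Matrix.mul_apply, Matrix.single, Matrix.diagonal_apply, ite_and,
      ite_mul, mul_ite, mul_zero, zero_mul, Finset.sum_ite_eq, Finset.sum_ite_eq',
      mul_comm]
  -- key bound : (1/σ u) * rs i u ≤ l * rsmax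
  have hkey : ∀ (i : Fin l) (u : V), (1 / σ u) * rs i u ≤ (l:ℝ) * rsmax := by
    intro i u
    have hSi : 0 < ∑ x, |rs i x| := hrspos i
    have h1 : rs i u / (∑ x, |rs i x|) ≤ ∑ j, rs j u / ∑ x, |rs j x| :=
      Finset.single_le_sum (f := fun j => rs j u / ∑ x, |rs j x|)
        (fun j _ => div_nonneg (hrs0 j u) (hrspos j).le) (Finset.mem_univ i)
    have hσu : rs i u / (∑ x, |rs i x|) ≤ (l:ℝ) * σ u := by
      rw [hσdef]
      have : (l:ℝ) * ((1 / (l : ℝ)) * ∑ j, rs j u / ∑ x, |rs j x|)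
          = ∑ j, rs j u / ∑ x, |rs j x| := by
        field_simp
      rw [this]
      exact h1
    -- rs i u ≤ l * σ u * Si ≤ l * σ u * rsmax
    have h2 : rs i u ≤ (l:ℝ) * σ u * (∑ x, |rs i x|) := by
      rw [div_le_iff₀ hSi] at hσu
      linarith
    have h3 : rs i u ≤ ((l:ℝ) * rsmax) * σ u := by
      calc rs i u ≤ (l:ℝ) * σ u * (∑ x, |rs i x|) := h2
        _ ≤ (l:ℝ) * σ u * rsmax := by
            refine mul_le_mul_of_nonneg_left (hrsub i) ?_
            exact mul_nonneg hlpos.le (hσpos u).le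
        _ = ((l:ℝ) * rsmax) * σ u := by ring
    rw [one_div, inv_mul_le_iff₀ (hσpos u)]
    calc rs i u ≤ ((l:ℝ) * rsmax) * σ u := h3
      _ = σ u * ((l:ℝ) * rsmax) := by ring
  have hbwd' : ∀ (j : Fin l) (u : V), ∑ x, π u x * rt j x ≤ π u (t j) := by
    intro j u
    have := hbwd j u
    have hp := hpt0 j u
    linarith
  have hPiSTe : ∀ (i j : Fin l), PiST i j = π (s i) (t j) := by
    intro i j; rw [hPiST]; rfl
  have hPiST0 : ∀ (i j : Fin l), 0 ≤ PiST i j := by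
    intro i j; rw [hPiSTe]; exact hπ0 _ _
  have hfwd' : ∀ (k j : Fin l), ∑ x, rs k x * π x (t j) ≤ PiST k j := by
    intro k j
    have := hfwd k (t j)
    have hp := hps0 k (t j)
    rw [hPiSTe]
    linarith
  set D : ℝ := (l:ℝ) * rsmax * rtmax with hD
  have hD0 : 0 ≤ D := by positivity
  -- M₁ entries
  have hM1e : ∀ i k : Fin l, M₁ i k
      = ∑ u, ∑ v, ∑ j, (σ u * π u v) *
        (((1 / σ u) * rs i u * rt j v) * ((1 / σ u) * rs k u * rt j v)) := by
    intro i k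
    rw [hM₁]
    simp only [Matrix.sum_apply, Matrix.smul_apply, Matrix.mul_apply,
      Matrix.transpose_apply, smul_eq_mul, hXe, Finset.mul_sum, hπdef]
  have hM10 : ∀ i k : Fin l, 0 ≤ M₁ i k := by
    intro i k
    rw [hM1e]
    refine Finset.sum_nonneg fun u _ => Finset.sum_nonneg fun v _ =>
      Finset.sum_nonneg fun j _ => ?_
    have h1 : 0 ≤ (1 / σ u) := one_div_nonneg.mpr (hσpos u).le
    exact mul_nonneg (mul_nonneg (hσpos u).le (hπ0 u v))
      (mul_nonneg (mul_nonneg (mul_nonneg h1 (hrs0 i u)) (hrt0 j v))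
        (mul_nonneg (mul_nonneg h1 (hrs0 k u)) (hrt0 j v)))
  have hM1ub : ∀ i k : Fin l, M₁ i k ≤ D * ∑ j, PiST k j := by
    intro i k
    rw [hM1e]
    have point : ∀ (u v : V) (j : Fin l),
        (σ u * π u v) * (((1 / σ u) * rs i u * rt j v) * ((1 / σ u) * rs k u * rt j v))
          ≤ D * (rs k u * (π u v * rt j v)) := by
      intro u v j
      have hσne : σ u ≠ 0 := (hσpos u).ne'
      have e1 : (σ u * π u v) * (((1 / σ u) * rs i u * rt j v) * ((1 / σ u) * rs k u * rt j v))
          = ((1 / σ u) * rs i u) * (rt j v * rt j v) * (π u v * rs k u) := by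
        field_simp
      rw [e1]
      have h1 : 0 ≤ (1 / σ u) * rs i u := mul_nonneg (one_div_nonneg.mpr (hσpos u).le) (hrs0 i u)
      have htt : rt j v * rt j v ≤ rtmax * rt j v :=
        mul_le_mul_of_nonneg_right (hrtub j v) (hrt0 j v)
      have htt0 : 0 ≤ rt j v * rt j v := mul_nonneg (hrt0 j v) (hrt0 j v)
      have hpk : 0 ≤ π u v * rs k u := mul_nonneg (hπ0 u v) (hrs0 k u)
      calc ((1 / σ u) * rs i u) * (rt j v * rt j v) * (π u v * rs k u)
          ≤ (((l:ℝ) * rsmax) * (rtmax * rt j v)) * (π u v * rs k u) := by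
            refine mul_le_mul_of_nonneg_right ?_ hpk
            exact mul_le_mul (hkey i u) htt htt0 (mul_nonneg hlpos.le hrsmax0)
        _ = D * (rs k u * (π u v * rt j v)) := by rw [hD]; ring
    calc ∑ u, ∑ v, ∑ j, (σ u * π u v) *
            (((1 / σ u) * rs i u * rt j v) * ((1 / σ u) * rs k u * rt j v))
        ≤ ∑ u, ∑ v, ∑ j, D * (rs k u * (π u v * rt j v)) :=
          Finset.sum_le_sum fun u _ => Finset.sum_le_sum fun v _ =>
            Finset.sum_le_sum fun j _ => point u v j
      _ = D * ∑ u, ∑ j, rs k u * ∑ v, π u v * rt j v := by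
          rw [Finset.sum_congr rfl fun u _ => Finset.sum_comm (γ := V)]
          simp_rw [Finset.mul_sum]
      _ ≤ D * ∑ u, ∑ j, rs k u * π u (t j) := by
          refine mul_le_mul_of_nonneg_left (Finset.sum_le_sum fun u _ =>
            Finset.sum_le_sum fun j _ => ?_) hD0
          exact mul_le_mul_of_nonneg_left (hbwd' j u) (hrs0 k u)
      _ = D * ∑ j, ∑ u, rs k u * π u (t j) := by rw [Finset.sum_comm]
      _ ≤ D * ∑ j, PiST k j :=
          mul_le_mul_of_nonneg_left (Finset.sum_le_sum fun j _ => hfwd' k j) hD0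
  -- M₂ entries
  have hM2e : ∀ j k : Fin l, M₂ j k
      = ∑ u, ∑ v, ∑ i, (σ u * π u v) *
        (((1 / σ u) * rs i u * rt j v) * ((1 / σ u) * rs i u * rt k v)) := by
    intro j k
    rw [hM₂]
    simp only [Matrix.sum_apply, Matrix.smul_apply, Matrix.mul_apply,
      Matrix.transpose_apply, smul_eq_mul, hXe, Finset.mul_sum, hπdef]
  have hM20 : ∀ j k : Fin l, 0 ≤ M₂ j k := by
    intro j k
    rw [hM2e]
    refine Finset.sum_nonneg fun u _ => Finset.sum_nonneg fun v _ =>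
      Finset.sum_nonneg fun i _ => ?_
    have h1 : 0 ≤ (1 / σ u) := one_div_nonneg.mpr (hσpos u).le
    exact mul_nonneg (mul_nonneg (hσpos u).le (hπ0 u v))
      (mul_nonneg (mul_nonneg (mul_nonneg h1 (hrs0 i u)) (hrt0 j v))
        (mul_nonneg (mul_nonneg h1 (hrs0 i u)) (hrt0 k v)))
  have hM2ub : ∀ j k : Fin l, M₂ j k ≤ D * ∑ i, PiSTᵀ k i := by
    intro j k
    rw [hM2e]
    have point : ∀ (u v : V) (i : Fin l),
        (σ u * π u v) * (((1 / σ u) * rs i u * rt j v) * ((1 / σ u) * rs i u * rt k v))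
          ≤ D * (rs i u * (π u v * rt k v)) := by
      intro u v i
      have hσne : σ u ≠ 0 := (hσpos u).ne'
      have e1 : (σ u * π u v) * (((1 / σ u) * rs i u * rt j v) * ((1 / σ u) * rs i u * rt k v))
          = ((1 / σ u) * rs i u) * (rt j v * rs i u) * (π u v * rt k v) := by
        field_simp
      rw [e1]
      have htt : rt j v * rs i u ≤ rtmax * rs i u :=
        mul_le_mul_of_nonneg_right (hrtub j v) (hrs0 i u)
      have htt0 : 0 ≤ rt j v * rs i u := mul_nonneg (hrt0 j v) (hrs0 i u)
      have hpk : 0 ≤ π u v * rt k v := mul_nonneg (hπ0 u v) (hrt0 k v)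
      calc ((1 / σ u) * rs i u) * (rt j v * rs i u) * (π u v * rt k v)
          ≤ (((l:ℝ) * rsmax) * (rtmax * rs i u)) * (π u v * rt k v) := by
            refine mul_le_mul_of_nonneg_right ?_ hpk
            exact mul_le_mul (hkey i u) htt htt0 (mul_nonneg hlpos.le hrsmax0)
        _ = D * (rs i u * (π u v * rt k v)) := by rw [hD]; ring
    calc ∑ u, ∑ v, ∑ i, (σ u * π u v) *
            (((1 / σ u) * rs i u * rt j v) * ((1 / σ u) * rs i u * rt k v))
        ≤ ∑ u, ∑ v, ∑ i, D * (rs i u * (π u v * rt k v)) :=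
          Finset.sum_le_sum fun u _ => Finset.sum_le_sum fun v _ =>
            Finset.sum_le_sum fun i _ => point u v i
      _ = D * ∑ u, ∑ i, rs i u * ∑ v, π u v * rt k v := by
          rw [Finset.sum_congr rfl fun u _ => Finset.sum_comm (γ := V)]
          simp_rw [Finset.mul_sum]
      _ ≤ D * ∑ u, ∑ i, rs i u * π u (t k) := by
          refine mul_le_mul_of_nonneg_left (Finset.sum_le_sum fun u _ =>
            Finset.sum_le_sum fun i _ => ?_) hD0
          exact mul_le_mul_of_nonneg_left (hbwd' k u) (hrs0 i u)
      _ = D * ∑ i, ∑ u, rs i u * π u (t k) := by rw [Finset.sum_comm]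
      _ ≤ D * ∑ i, PiSTᵀ k i := by
          refine mul_le_mul_of_nonneg_left (Finset.sum_le_sum fun i _ => ?_) hD0
          simpa [Matrix.transpose_apply] using hfwd' i k
  -- conclude
  have hfrobT : frobNorm PiSTᵀ = frobNorm PiST := by
    rw [frobNorm, frobNorm, Finset.sum_comm]
    simp [Matrix.transpose_apply]
  have h1 : specNorm M₁ ≤ (l:ℝ) * D * frobNorm PiST :=
    specNorm_le_of_entry_bound_aux M₁ PiST D hD0 hM10 hM1ub
  have h2 : specNorm M₂ ≤ (l:ℝ) * D * frobNorm PiST := by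
    have := specNorm_le_of_entry_bound_aux M₂ PiSTᵀ D hD0 hM20 hM2ub
    rwa [hfrobT] at this
  have heq : (l:ℝ) * D * frobNorm PiST = (l : ℝ) ^ 2 * rsmax * rtmax * frobNorm PiST := by
    rw [hD]; ring
  rw [← heq]
  exact max_le h1 h2
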